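/- For all natural numbers p and q with p + q even, the real Clifford algebra C(p,q) is a simple ring (its only two-sided ideals are 0 and the whole algebra). -/

import Mathlib

/-- The quadratic form `Q_{p,q}` on `ℝ^(p+q)`:
`Q_{p,q}(x) = ∑_{i<p} x_i² − ∑_{p≤i<p+q} x_i²`. -/
noncomputable def Qpq (p q : ℕ) : QuadraticForm ℝ (Fin (p + q) → ℝ) :=
  QuadraticMap.weightedSumSquares ℝ (fun i : Fin (p + q) => if (i : ℕ) < p then (1 : ℝ) else -1)

/-- The real Clifford algebra `C(p,q)`. -/
noncomputable abbrev RealCliffordAlgebra (p q : ℕ) := CliffordAlgebra (Qpq p q)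




noncomputable section
namespace CliffSimple
open CliffordAlgebra

variable {n : ℕ} (d : Fin n → ℝ)

def Qd : QuadraticForm ℝ (Fin n → ℝ) := QuadraticMap.weightedSumSquares ℝ d

def e (i : Fin n) : CliffordAlgebra (Qd d) := ι (Qd d) (Pi.single i 1)

lemma Qd_single (i : Fin n) : Qd d (Pi.single i 1) = d i := by
  rw [Qd, QuadraticMap.weightedSumSquares_apply]
  rw [Finset.sum_eq_single i]
  · simp
  · intro j _ hj; simp [Pi.single_apply, hj]
  · simp

lemma Qd_single_add_single {i j : Fin n} (h : i ≠ j) :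
    Qd d (Pi.single i 1 + Pi.single j 1) = d i + d j := by
  rw [Qd, QuadraticMap.weightedSumSquares_apply]
  have : ∀ k : Fin n, d k • (((Pi.single i 1 + Pi.single j 1) : Fin n → ℝ) k * ((Pi.single i 1 + Pi.single j 1) : Fin n → ℝ) k)
      = (if k = i then d i else 0) + (if k = j then d j else 0) := by
    intro k
    show d k • (((Pi.single i 1 + Pi.single j 1) : Fin n → ℝ) k * ((Pi.single i 1 + Pi.single j 1) : Fin n → ℝ) k) = _
    rcases eq_or_ne k i with rfl | hki
    · simp [Pi.single_apply, h, Ne.symm h]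
    · rcases eq_or_ne k j with rfl | hkj
      · simp [Pi.single_apply, hki, h.symm]
      · simp [Pi.single_apply, hki, hkj]
  rw [Finset.sum_congr rfl fun k _ => this k, Finset.sum_add_distrib]
  simp

lemma e_sq (i : Fin n) : e d i * e d i = algebraMap ℝ _ (d i) := by
  rw [e, ι_sq_scalar, Qd_single]

lemma e_anticomm {i j : Fin n} (h : i ≠ j) : e d i * e d j = -(e d j * e d i) := by
  have hp : QuadraticMap.polar (Qd d) (Pi.single i 1) (Pi.single j 1) = 0 := by
    rw [QuadraticMap.polar, Qd_single_add_single d h, Qd_single, Qd_single]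
    ring
  have := ι_mul_ι_add_swap (Q := Qd d) (Pi.single i (1:ℝ)) (Pi.single j 1)
  rw [hp, map_zero] at this
  rw [e, e]
  exact eq_neg_of_add_eq_zero_left this
def eS (S : Finset (Fin n)) : CliffordAlgebra (Qd d) :=
  ((S.sort (· ≤ ·)).map (e d)).prod

lemma eS_empty : eS d ∅ = 1 := by simp [eS]

lemma eS_singleton (i : Fin n) : eS d {i} = e d i := by simp [eS]

lemma eS_insert {a : Fin n} {S : Finset (Fin n)} (h : ∀ x ∈ S, a < x) :
    eS d (insert a S) = e d a * eS d S := by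
  have ha : a ∉ S := fun h' => lt_irrefl a (h a h')
  rw [eS, Finset.sort_insert (r := (· ≤ ·)) (fun b hb => le_of_lt (h b hb)) ha]
  simp [eS]

/-- one-sided anticommutation past a product avoiding `i` -/
lemma comm0 {i : Fin n} {S : Finset (Fin n)} (hS : i ∉ S) :
    e d i * eS d S = ((-1 : ℝ)) ^ S.card • (eS d S * e d i) := by
  induction S using Finset.induction_on_min with
  | empty => simp [eS_empty]
  | insert a S hlt IH =>
    have ha : a ∉ S := fun h' => lt_irrefl a (hlt a h')
    have hia : i ≠ a := fun h => hS (h ▸ Finset.mem_insert_self a S)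
    have hiS : i ∉ S := fun h => hS (Finset.mem_insert_of_mem h)
    rw [eS_insert d hlt, Finset.card_insert_of_notMem ha]
    calc e d i * (e d a * eS d S) = (e d i * e d a) * eS d S := by rw [mul_assoc]
      _ = -((e d a * e d i) * eS d S) := by rw [e_anticomm d hia]; simp
      _ = -(e d a * (e d i * eS d S)) := by rw [mul_assoc]
      _ = -(e d a * ((-1 : ℝ) ^ S.card • (eS d S * e d i))) := by rw [IH hiS]
      _ = (-1 : ℝ) ^ (S.card + 1) • (e d a * eS d S * e d i) := by
          rw [mul_smul_comm, pow_succ]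
          rw [← neg_smul, mul_assoc]
          congr 1
          ring

lemma comm0' {i : Fin n} {S : Finset (Fin n)} (hS : i ∉ S) :
    eS d S * e d i = ((-1 : ℝ)) ^ S.card • (e d i * eS d S) := by
  rw [comm0 d hS, smul_smul, ← pow_add, ← two_mul, pow_mul]
  norm_num

/-- conjugation sign -/
lemma conj_eS (S : Finset (Fin n)) (i : Fin n) :
    e d i * eS d S * e d i = ((-1 : ℝ) ^ ((S.erase i).card) * d i) • eS d S := by
  induction S using Finset.induction_on_min with
  | empty =>
    rw [eS_empty, mul_one, e_sq, Finset.erase_empty, Finset.card_empty, pow_zero, one_mul,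
      Algebra.algebraMap_eq_smul_one]
  | insert a S hlt IH =>
    have ha : a ∉ S := fun h' => lt_irrefl a (hlt a h')
    rcases eq_or_ne i a with rfl | hia
    · rw [Finset.erase_insert ha, eS_insert d hlt]
      calc e d i * (e d i * eS d S) * e d i
          = (e d i * e d i) * (eS d S * e d i) := by rw [← mul_assoc, mul_assoc]
        _ = algebraMap ℝ _ (d i) * ((-1 : ℝ) ^ S.card • (e d i * eS d S)) := by
            rw [e_sq, comm0' d ha]
        _ = ((-1 : ℝ) ^ S.card * d i) • (e d i * eS d S) := by
            rw [mul_smul_comm, ← Algebra.smul_def, smul_smul, mul_comm]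
    · have h1 : e d i * eS d (insert a S) * e d i
          = -(e d a * (e d i * eS d S * e d i)) := by
        rw [eS_insert d hlt, ← mul_assoc, ← mul_assoc, e_anticomm d hia]
        simp [mul_assoc]
      rw [h1, IH, Finset.erase_insert_of_ne hia.symm, Finset.card_insert_of_notMem
        (fun h => ha (Finset.mem_of_mem_erase h))]
      rw [mul_smul_comm, ← eS_insert d hlt, ← neg_smul, pow_succ]
      congr 1
      ring

lemma symmDiff_empty_left (B : Finset (Fin n)) : symmDiff (∅ : Finset (Fin n)) B = B := by
  ext x; simp [Finset.mem_symmDiff]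

lemma symmDiff_insert_self {i : Fin n} {S : Finset (Fin n)} (h : i ∉ S) :
    symmDiff (insert i S) {i} = S := by
  ext x
  simp only [Finset.mem_symmDiff, Finset.mem_insert, Finset.mem_singleton]
  rcases eq_or_ne x i with rfl | hxi
  · simp [h]
  · simp [hxi]

lemma symmDiff_single_notMem {i : Fin n} {S : Finset (Fin n)} (h : i ∉ S) :
    symmDiff S {i} = insert i S := by
  ext x
  simp only [Finset.mem_symmDiff, Finset.mem_insert, Finset.mem_singleton]
  rcases eq_or_ne x i with rfl | hxi
  · simp [h]
  · simp [hxi]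

lemma insert_eq_symmDiff {a : Fin n} {A : Finset (Fin n)} (h : a ∉ A) :
    insert a A = symmDiff A {a} := (symmDiff_single_notMem h).symm

lemma e_mul_eS (hd : ∀ i, d i = 1 ∨ d i = -1) (i : Fin n) (S : Finset (Fin n)) :
    ∃ c : ℝ, c ≠ 0 ∧ e d i * eS d S = c • eS d (symmDiff S {i}) := by
  induction S using Finset.induction_on_min with
  | empty =>
    refine ⟨1, one_ne_zero, ?_⟩
    rw [eS_empty, mul_one, one_smul, symmDiff_empty_left, eS_singleton]
  | insert a S hlt IH =>
    have ha : a ∉ S := fun h' => lt_irrefl a (hlt a h')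
    rcases lt_trichotomy i a with hia | rfl | hai
    · -- i < a
      refine ⟨1, one_ne_zero, ?_⟩
      have hi : ∀ x ∈ insert a S, i < x := by
        intro x hx
        rcases Finset.mem_insert.mp hx with rfl | hx
        · exact hia
        · exact hia.trans (hlt x hx)
      have hiS : i ∉ insert a S := fun h => lt_irrefl i (hi i h)
      rw [← eS_insert d hi, one_smul, symmDiff_single_notMem hiS]
    · -- i = a
      refine ⟨d i, fun h => by rcases hd i with h' | h' <;> rw [h'] at h <;> norm_num at h, ?_⟩
      rw [symmDiff_insert_self ha, eS_insert d hlt, ← mul_assoc, e_sq, ← Algebra.smul_def]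
    · -- a < i
      obtain ⟨c, hc0, hc⟩ := IH
      refine ⟨-c, neg_ne_zero.mpr hc0, ?_⟩
      have hlt' : ∀ x ∈ symmDiff S {i}, a < x := by
        intro x hx
        rcases Finset.mem_symmDiff.mp hx with ⟨hx, -⟩ | ⟨hx, -⟩
        · exact hlt x hx
        · exact Finset.mem_singleton.mp hx ▸ hai
      have haD : a ∉ symmDiff S {i} := by
        intro h
        rcases Finset.mem_symmDiff.mp h with ⟨h1, -⟩ | ⟨h1, -⟩
        · exact ha h1
        · exact (ne_of_gt hai) (Finset.mem_singleton.mp h1).symm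
      have hsym : insert a (symmDiff S {i}) = symmDiff (insert a S) {i} := by
        rw [insert_eq_symmDiff haD, insert_eq_symmDiff ha, symmDiff_right_comm]
      calc e d i * eS d (insert a S) = e d i * (e d a * eS d S) := by rw [eS_insert d hlt]
        _ = -(e d a * (e d i * eS d S)) := by
            rw [← mul_assoc, ← mul_assoc, e_anticomm d (ne_of_gt hai)]; simp [mul_assoc]
        _ = -(e d a * (c • eS d (symmDiff S {i}))) := by rw [hc]
        _ = (-c) • (e d a * eS d (symmDiff S {i})) := by rw [mul_smul_comm, neg_smul]
        _ = (-c) • eS d (symmDiff (insert a S) {i}) := by rw [← eS_insert d hlt', hsym]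

lemma eS_mul_eS (hd : ∀ i, d i = 1 ∨ d i = -1) (A B : Finset (Fin n)) :
    ∃ c : ℝ, c ≠ 0 ∧ eS d A * eS d B = c • eS d (symmDiff A B) := by
  induction A using Finset.induction_on_min with
  | empty =>
    refine ⟨1, one_ne_zero, ?_⟩
    rw [eS_empty, one_mul, one_smul, symmDiff_empty_left]
  | insert a A hlt IH =>
    have ha : a ∉ A := fun h' => lt_irrefl a (hlt a h')
    obtain ⟨c, hc0, hc⟩ := IH
    obtain ⟨c', hc0', hc'⟩ := e_mul_eS d hd a (symmDiff A B)
    refine ⟨c * c', mul_ne_zero hc0 hc0', ?_⟩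
    have hsym : symmDiff (symmDiff A B) {a} = symmDiff (insert a A) B := by
      rw [insert_eq_symmDiff ha, symmDiff_assoc, symmDiff_comm B {a}, ← symmDiff_assoc]
    calc eS d (insert a A) * eS d B = e d a * (eS d A * eS d B) := by
          rw [eS_insert d hlt, mul_assoc]
      _ = c • (e d a * eS d (symmDiff A B)) := by rw [hc, mul_smul_comm]
      _ = c • (c' • eS d (symmDiff (symmDiff A B) {a})) := by rw [hc']
      _ = (c * c') • eS d (symmDiff (insert a A) B) := by rw [smul_smul, hsym]

lemma span_eS (hd : ∀ i, d i = 1 ∨ d i = -1) :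
    Submodule.span ℝ (Set.range (eS d)) = ⊤ := by
  rw [eq_top_iff]
  rintro x -
  induction x using CliffordAlgebra.induction with
  | algebraMap r =>
    rw [Algebra.algebraMap_eq_smul_one, ← eS_empty d]
    exact Submodule.smul_mem _ _ (Submodule.subset_span ⟨∅, rfl⟩)
  | ι v =>
    have hs : ∀ j : Fin n, (Pi.single j (v j) : Fin n → ℝ) = v j • (Pi.single j 1 : Fin n → ℝ) :=
      fun j => by rw [← Pi.single_smul, smul_eq_mul, mul_one]
    have hv : ι (Qd d) v = ∑ i : Fin n, v i • e d i := by
      conv_lhs => rw [← Finset.univ_sum_single v]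
      rw [map_sum]
      refine Finset.sum_congr rfl fun i _ => ?_
      rw [hs i, map_smul]
      rfl
    rw [hv]
    exact Submodule.sum_mem _ fun i _ =>
      Submodule.smul_mem _ _ (Submodule.subset_span ⟨{i}, eS_singleton d i⟩)
  | mul a b ha hb =>
    have hmul : Submodule.span ℝ (Set.range (eS d)) * Submodule.span ℝ (Set.range (eS d)) ≤
        Submodule.span ℝ (Set.range (eS d)) := by
      rw [Submodule.span_mul_span, Submodule.span_le]
      rintro z ⟨z1, ⟨A, rfl⟩, z2, ⟨B, rfl⟩, rfl⟩
      show eS d A * eS d B ∈ _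
      obtain ⟨c, -, hc⟩ := eS_mul_eS d hd A B
      rw [hc]
      exact Submodule.smul_mem _ _ (Submodule.subset_span ⟨_, rfl⟩)
    exact hmul (Submodule.mul_mem_mul ha hb)
  | add a b ha hb => exact Submodule.add_mem _ ha hb

/-- Averaging map for generator `i`. -/
def Pmap (i : Fin n) : CliffordAlgebra (Qd d) →ₗ[ℝ] CliffordAlgebra (Qd d) :=
  (2⁻¹ : ℝ) • (LinearMap.id + (d i) • ((LinearMap.mulRight ℝ (e d i)).comp (LinearMap.mulLeft ℝ (e d i))))

lemma Pmap_apply (i : Fin n) (x : CliffordAlgebra (Qd d)) :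
    Pmap d i x = (2⁻¹ : ℝ) • (x + d i • (e d i * x * e d i)) := rfl

lemma Pmap_eS (hd : ∀ i, d i = 1 ∨ d i = -1) (i : Fin n) (S : Finset (Fin n)) :
    Pmap d i (eS d S) =
      if Even ((S.erase i).card) then eS d S else 0 := by
  have hdd : d i * d i = 1 := by rcases hd i with h | h <;> rw [h] <;> norm_num
  rw [Pmap_apply, conj_eS, smul_smul]
  have : d i * ((-1 : ℝ) ^ (S.erase i).card * d i) = (-1 : ℝ) ^ (S.erase i).card := by
    rw [mul_comm (d i), mul_assoc, hdd, mul_one]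
  rw [this]
  by_cases h : Even ((S.erase i).card)
  · rw [if_pos h, h.neg_one_pow, one_smul, ← two_smul ℝ, smul_smul]
    norm_num
  · rw [if_neg h, (Nat.not_even_iff_odd.mp h).neg_one_pow]
    rw [neg_one_smul, add_neg_cancel, smul_zero]

/-- fold of the averaging maps over a list of indices -/
def papply (l : List (Fin n)) : CliffordAlgebra (Qd d) →ₗ[ℝ] CliffordAlgebra (Qd d) :=
  l.foldr (fun i f => (Pmap d i).comp f) LinearMap.id

lemma papply_nil (x : CliffordAlgebra (Qd d)) : papply d [] x = x := rfl

lemma papply_cons (i : Fin n) (l : List (Fin n)) (x : CliffordAlgebra (Qd d)) :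
    papply d (i :: l) x = Pmap d i (papply d l x) := rfl

lemma papply_eS_of (hd : ∀ i, d i = 1 ∨ d i = -1) (l : List (Fin n)) (S : Finset (Fin n))
    (h : ∀ i ∈ l, Even ((S.erase i).card)) : papply d l (eS d S) = eS d S := by
  induction l with
  | nil => rfl
  | cons j t IH =>
    rw [papply_cons, IH (fun i hi => h i (List.mem_cons_of_mem j hi)), Pmap_eS d hd,
      if_pos (h j (List.mem_cons_self (a := j) (l := t)))]

lemma papply_eS_zero (hd : ∀ i, d i = 1 ∨ d i = -1) (l : List (Fin n)) (S : Finset (Fin n))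
    (h : ∃ i ∈ l, ¬ Even ((S.erase i).card)) : papply d l (eS d S) = 0 := by
  induction l with
  | nil => obtain ⟨i, hi, -⟩ := h; exact absurd hi List.not_mem_nil
  | cons j t IH =>
    rw [papply_cons]
    by_cases ht : ∃ i ∈ t, ¬ Even ((S.erase i).card)
    · rw [IH ht, map_zero]
    · push_neg at ht
      obtain ⟨i, hi, hodd⟩ := h
      have hij : i = j := by
        rcases List.mem_cons.mp hi with rfl | hit
        · rfl
        · exact absurd (ht i hit) hodd
      subst hij
      rw [papply_eS_of d hd t S ht, Pmap_eS d hd, if_neg hodd]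

lemma papply_mem (I : TwoSidedIdeal (CliffordAlgebra (Qd d))) (l : List (Fin n))
    {x : CliffordAlgebra (Qd d)} (hx : x ∈ I) : papply d l x ∈ I := by
  induction l with
  | nil => exact hx
  | cons j t IH =>
    rw [papply_cons, Pmap_apply]
    have h1 : e d j * papply d t x * e d j ∈ I :=
      I.mul_mem_right _ _ (I.mul_mem_left _ _ IH)
    have h2 : d j • (e d j * papply d t x * e d j) ∈ I := by
      rw [Algebra.smul_def]; exact I.mul_mem_left _ _ h1
    have h3 : papply d t x + d j • (e d j * papply d t x * e d j) ∈ I := I.add_mem IH h2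
    rw [Algebra.smul_def]; exact I.mul_mem_left _ _ h3

/-- the odd-parity witness for a nonempty set, `n` even -/
lemma exists_odd_erase (hn : Even n) {U : Finset (Fin n)} (hU : U ≠ ∅) :
    ∃ i : Fin n, ¬ Even ((U.erase i).card) := by
  obtain ⟨a, haU⟩ := Finset.nonempty_iff_ne_empty.mpr hU
  by_cases hcard : Even U.card
  · refine ⟨a, ?_⟩
    rw [Finset.card_erase_of_mem haU]
    intro hev
    have h1 : 1 ≤ U.card := Finset.card_pos.mpr ⟨a, haU⟩
    rw [Nat.even_iff] at hcard hev
    omega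
  · have hUuniv : U ≠ Finset.univ := by
      intro h
      rw [h, Finset.card_univ, Fintype.card_fin] at hcard
      exact hcard hn
    have : ∃ i : Fin n, i ∉ U := by
      by_contra h
      push_neg at h
      exact hUuniv (Finset.eq_univ_iff_forall.mpr h)
    obtain ⟨i, hi⟩ := this
    exact ⟨i, by rwa [Finset.erase_eq_of_notMem hi]⟩

theorem simple (hd : ∀ i, d i = 1 ∨ d i = -1) (hn : Even n) :
    IsSimpleRing (CliffordAlgebra (Qd d)) := by
  haveI : Nontrivial (TwoSidedIdeal (CliffordAlgebra (Qd d))) :=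
    ⟨⊥, ⊤, fun h => one_ne_zero (α := CliffordAlgebra (Qd d))
      ((h ▸ TwoSidedIdeal.mem_top _ : (1:CliffordAlgebra (Qd d)) ∈ (⊥ : TwoSidedIdeal (CliffordAlgebra (Qd d)))))⟩
  constructor
  refine ⟨fun I => ?_⟩
  by_cases hI : I = ⊥
  · exact Or.inl hI
  · refine Or.inr ?_
    have hlt : (⊥ : TwoSidedIdeal (CliffordAlgebra (Qd d))) < I :=
      lt_of_le_of_ne bot_le (Ne.symm hI)
    obtain ⟨x, hxI, hx0'⟩ := SetLike.exists_of_lt hlt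
    have hx0 : x ≠ 0 := fun h => hx0' h
    have hxspan : x ∈ Submodule.span ℝ (Set.range (eS d)) := by rw [span_eS d hd]; trivial
    obtain ⟨coef, hcoef⟩ := (Submodule.mem_span_range_iff_exists_fun ℝ).mp hxspan
    have hT : ∃ T, coef T ≠ 0 := by
      by_contra h
      push_neg at h
      apply hx0
      rw [← hcoef]
      simp [h]
    obtain ⟨T, hT⟩ := hT
    choose c hc0 hc using fun S => eS_mul_eS d hd T S
    set l := List.finRange n with hl
    have term : ∀ S : Finset (Fin n),
        papply d l (eS d T * (coef S • eS d S)) =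
        if S = T then (coef T * c T) • 1 else 0 := by
      intro S
      rw [mul_smul_comm, map_smul, hc S, map_smul]
      rcases eq_or_ne S T with rfl | hST
      · rw [if_pos rfl, symmDiff_self, Finset.bot_eq_empty,
          papply_eS_of d hd l ∅ (fun i _ => by simp), eS_empty, smul_smul]
      · rw [if_neg hST]
        have hne : symmDiff T S ≠ ∅ := by
          intro h
          exact hST (symmDiff_eq_bot.mp (Finset.bot_eq_empty ▸ h)).symm
        obtain ⟨i, hi⟩ := exists_odd_erase hn hne
        rw [papply_eS_zero d hd l _ ⟨i, List.mem_finRange i, hi⟩, smul_zero, smul_zero]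
    have key : papply d l (eS d T * x) = (coef T * c T) • 1 := by
      rw [← hcoef, Finset.mul_sum, map_sum]
      rw [Finset.sum_congr rfl fun S _ => term S]
      simp
    have hmem : (coef T * c T) • (1 : CliffordAlgebra (Qd d)) ∈ I := by
      rw [← key]
      exact papply_mem d I l (I.mul_mem_left _ _ hxI)
    have h1 : (1 : CliffordAlgebra (Qd d)) ∈ I := by
      have h2 := I.mul_mem_left (algebraMap ℝ _ (coef T * c T)⁻¹) _ hmem
      rwa [← Algebra.smul_def, smul_smul, inv_mul_cancel₀ (mul_ne_zero hT (hc0 T)),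
        one_smul] at h2
    exact TwoSidedIdeal.eq_top I h1

end CliffSimple
end

/-- For `p + q` even, the real Clifford algebra `C(p,q)` is a simple ring. -/
theorem real_clifford_simple (p q : ℕ) (h : Even (p + q)) :
    IsSimpleRing (RealCliffordAlgebra p q) := by
  exact CliffSimple.simple (fun i : Fin (p + q) => if (i : ℕ) < p then (1 : ℝ) else -1)
    (fun i => by split_ifs; exacts [Or.inl rfl, Or.inr rfl]) h
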